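/- Let t⁰ < t¹ and let f : ℝ → ℝ and u : ℝ × [t⁰,t¹] → ℝ be continuously differentiable, with u satisfying ∂u/∂t (x,t) + ∂(f(u(x,t)))/∂x = 0 for all x ∈ ℝ and t ∈ [t⁰,t¹]. Let σ, γ : [t⁰,t¹] → ℝ be differentiable curves with σ(t) ≤ γ(t) for all t, satisfying the no-flow conditions u(σ(t),t)·σ'(t) = f(u(σ(t),t)) and u(γ(t),t)·γ'(t) = f(u(γ(t),t)) for all t ∈ [t⁰,t¹]. Then the function t ↦ ∫_{σ(t)}^{γ(t)} u(x,t) dx is constant on [t⁰,t¹]; in particular ∫_{σ(t¹)}^{γ(t¹)} u(x,t¹) dx = ∫_{σ(t⁰)}^{γ(t⁰)} u(x,t⁰) dx. -/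

import Mathlib

open intervalIntegral MeasureTheory Filter Metric Topology

private lemma const_aux {g : ℝ → ℝ} {a b : ℝ} (hab : a < b)
    (hc : ContinuousOn g (Set.Icc a b))
    (hd : ∀ t ∈ Set.Ioo a b, HasDerivAt g 0 t) :
    ∀ t ∈ Set.Icc a b, g t = g a := by
  set m := (a + b) / 2 with hm
  have hmJ : m ∈ Set.Ioo a b := by constructor <;> simp only [hm] <;> linarith
  have hIoo : ∀ t ∈ Set.Ioo a b, g t = g m := by
    intro t htJ
    rcases le_total m t with hmt | htm
    · have := constant_of_has_deriv_right_zero (f := g) (a := m) (b := t)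
        (hc.mono (Set.Icc_subset_Icc hmJ.1.le htJ.2.le))
        (fun x hx => (hd x ⟨lt_of_lt_of_le hmJ.1 hx.1, hx.2.trans htJ.2⟩).hasDerivWithinAt)
      exact this t (Set.right_mem_Icc.mpr hmt)
    · have := constant_of_has_deriv_right_zero (f := g) (a := t) (b := m)
        (hc.mono (Set.Icc_subset_Icc htJ.1.le hmJ.2.le))
        (fun x hx => (hd x ⟨lt_of_lt_of_le htJ.1 hx.1, hx.2.trans hmJ.2⟩).hasDerivWithinAt)
      exact (this m (Set.right_mem_Icc.mpr htm)).symm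
  have hlim : ∀ p ∈ Set.Icc a b, (𝓝[Set.Ioo a b] p).NeBot → g p = g m := by
    intro p hp hnb
    have h1 : Filter.Tendsto g (𝓝[Set.Ioo a b] p) (𝓝 (g p)) :=
      (hc p hp).tendsto.mono_left (nhdsWithin_mono p Set.Ioo_subset_Icc_self)
    have h2 : Filter.Tendsto g (𝓝[Set.Ioo a b] p) (𝓝 (g m)) := by
      apply Filter.Tendsto.congr' _ tendsto_const_nhds
      filter_upwards [self_mem_nhdsWithin] with s hs using (hIoo s hs).symm
    exact tendsto_nhds_unique h1 h2
  have hnba : (𝓝[Set.Ioo a b] a).NeBot := by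
    rw [← mem_closure_iff_nhdsWithin_neBot, closure_Ioo hab.ne]
    exact ⟨le_rfl, hab.le⟩
  have hnbb : (𝓝[Set.Ioo a b] b).NeBot := by
    rw [← mem_closure_iff_nhdsWithin_neBot, closure_Ioo hab.ne]
    exact ⟨hab.le, le_rfl⟩
  have hga : g a = g m := hlim a ⟨le_rfl, hab.le⟩ hnba
  intro t htI
  rcases eq_or_lt_of_le htI.1 with h | h
  · rw [← h]
  rcases eq_or_lt_of_le htI.2 with h' | h'
  · rw [h']
    exact (hlim b ⟨hab.le, le_rfl⟩ hnbb).trans hga.symm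
  · exact (hIoo t ⟨h, h'⟩).trans hga.symm

/-- Conservation property of the no-flow region for a 1D scalar conservation
law `u_t + f(u)_x = 0`: the amount of the conserved quantity between two
lateral curves with the no-flow slope condition is constant in time. -/
theorem stmt_6 (t0 t1 : ℝ) (ht : t0 < t1)
    (f : ℝ → ℝ) (u : ℝ → ℝ → ℝ)
    (hf : ContDiff ℝ 1 f)
    (hu : ContDiffOn ℝ 1 (fun p : ℝ × ℝ => u p.1 p.2) (Set.univ ×ˢ Set.Icc t0 t1))
    (hpde : ∀ x : ℝ, ∀ t ∈ Set.Icc t0 t1,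
      deriv (fun s => u x s) t + deriv (fun y => f (u y t)) x = 0)
    (σ γ : ℝ → ℝ) (σ' γ' : ℝ → ℝ)
    (hσ : ∀ t ∈ Set.Icc t0 t1, HasDerivAt σ (σ' t) t)
    (hγ : ∀ t ∈ Set.Icc t0 t1, HasDerivAt γ (γ' t) t)
    (hle : ∀ t ∈ Set.Icc t0 t1, σ t ≤ γ t)
    (hnfσ : ∀ t ∈ Set.Icc t0 t1, u (σ t) t * σ' t = f (u (σ t) t))
    (hnfγ : ∀ t ∈ Set.Icc t0 t1, u (γ t) t * γ' t = f (u (γ t) t)) :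
    (∀ t ∈ Set.Icc t0 t1, (∫ x in σ t..γ t, u x t) = ∫ x in σ t0..γ t0, u x t0) ∧
      (∫ x in σ t1..γ t1, u x t1) = ∫ x in σ t0..γ t0, u x t0 := by
  have tIcc : ∀ {t : ℝ}, t ∈ Set.Ioo t0 t1 → t ∈ Set.Icc t0 t1 :=
    fun h => Set.Ioo_subset_Icc_self h
  -- continuity of `u (·, t)` for `t` in the time strip
  have hcx : ∀ t ∈ Set.Icc t0 t1, Continuous fun x => u x t := by
    intro t htI
    rw [← continuousOn_univ]
    have hmap : Continuous fun x : ℝ => ((x : ℝ), t) := continuous_id.prodMk continuous_const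
    exact hu.continuousOn.comp hmap.continuousOn (fun x _ => ⟨Set.mem_univ x, htI⟩)
  -- smoothness at interior points
  have hUat : ∀ (x t : ℝ), t ∈ Set.Ioo t0 t1 →
      ContDiffAt ℝ 1 (fun p : ℝ × ℝ => u p.1 p.2) (x, t) := by
    intro x t htJ
    exact hu.contDiffAt (prod_mem_nhds Filter.univ_mem (Icc_mem_nhds htJ.1 htJ.2))
  -- the time partial derivative
  set vt : ℝ × ℝ → ℝ :=
    fun p => fderiv ℝ (fun p : ℝ × ℝ => u p.1 p.2) p ((0 : ℝ), (1 : ℝ)) with hvt_def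
  have hvt : ∀ (x t : ℝ), t ∈ Set.Ioo t0 t1 →
      HasDerivAt (fun s => u x s) (vt (x, t)) t := by
    intro x t htJ
    have h1 : HasFDerivAt (fun p : ℝ × ℝ => u p.1 p.2)
        (fderiv ℝ (fun p : ℝ × ℝ => u p.1 p.2) (x, t)) (x, t) :=
      ((hUat x t htJ).differentiableAt one_ne_zero).hasFDerivAt
    have h2 : HasDerivAt (fun s : ℝ => ((x : ℝ), s)) ((0 : ℝ), (1 : ℝ)) t :=
      HasDerivAt.prodMk (hasDerivAt_const t x) (hasDerivAt_id t)
    exact h1.comp_hasDerivAt t h2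
  have hvtc : ContinuousOn vt (Set.univ ×ˢ Set.Ioo t0 t1) := by
    have h1 : ContDiffOn ℝ 1 (fun p : ℝ × ℝ => u p.1 p.2) (Set.univ ×ˢ Set.Ioo t0 t1) :=
      hu.mono (Set.prod_mono_right Set.Ioo_subset_Icc_self)
    have h2 := h1.continuousOn_fderiv_of_isOpen (isOpen_univ.prod isOpen_Ioo) le_rfl
    exact ((ContinuousLinearMap.apply ℝ ℝ ((0 : ℝ), (1 : ℝ))).continuous).comp_continuousOn h2
  -- the function `y ↦ f (u y t)` is C¹ for interior `t`
  have hgC1 : ∀ t ∈ Set.Ioo t0 t1, ContDiff ℝ 1 fun y => f (u y t) := by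
    intro t htJ
    have h1 : ContDiff ℝ 1 fun y : ℝ => u y t := by
      rw [contDiff_iff_contDiffAt]
      intro y
      exact (hUat y t htJ).comp y (ContDiffAt.prodMk contDiffAt_id contDiffAt_const)
    exact hf.comp h1
  -- rewriting the PDE at interior points
  have hpde' : ∀ (x : ℝ), ∀ t ∈ Set.Ioo t0 t1,
      vt (x, t) = -deriv (fun y => f (u y t)) x := by
    intro x t htJ
    have h1 := hpde x t (tIcc htJ)
    have h2 : deriv (fun s => u x s) t = vt (x, t) := (hvt x t htJ).deriv
    linarith
  -- value of the integral of the time derivative via FTC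
  have hint_vt : ∀ t ∈ Set.Ioo t0 t1, ∀ a b : ℝ,
      (∫ x in a..b, vt (x, t)) = f (u a t) - f (u b t) := by
    intro t htJ a b
    have h1 : (∫ x in a..b, vt (x, t)) = ∫ x in a..b, -deriv (fun y => f (u y t)) x :=
      intervalIntegral.integral_congr (fun x _ => hpde' x t htJ)
    rw [h1, intervalIntegral.integral_neg, intervalIntegral.integral_deriv_eq_sub
      (fun x _ => ((hgC1 t htJ).differentiable one_ne_zero x))
      (((hgC1 t htJ).continuous_deriv le_rfl).intervalIntegrable a b)]
    ring
  -- key: derivative of `s ↦ ∫ x in 0..c s, u x s` for a no-flow curve `c`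
  have key : ∀ (c c' : ℝ → ℝ), (∀ t ∈ Set.Icc t0 t1, HasDerivAt c (c' t) t) →
      (∀ t ∈ Set.Icc t0 t1, u (c t) t * c' t = f (u (c t) t)) →
      ∀ t ∈ Set.Ioo t0 t1,
        HasDerivAt (fun s => ∫ x in (0 : ℝ)..c s, u x s) (f (u 0 t)) t := by
    intro c c' hc hnf t htJ
    obtain ⟨ht0, ht1⟩ := htJ
    have htJ : t ∈ Set.Ioo t0 t1 := ⟨ht0, ht1⟩
    have htI : t ∈ Set.Icc t0 t1 := tIcc htJ
    set cc := c t with hcc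
    obtain ⟨ε, εpos, hball⟩ : ∃ ε > 0, Metric.closedBall t ε ⊆ Set.Ioo t0 t1 := by
      refine ⟨min (t - t0) (t1 - t) / 2,
        div_pos (lt_min (by linarith) (by linarith)) two_pos, ?_⟩
      intro s hs
      rw [Metric.mem_closedBall, Real.dist_eq] at hs
      have h1 := abs_le.mp hs
      have h2 : min (t - t0) (t1 - t) ≤ t - t0 := min_le_left _ _
      have h3 : min (t - t0) (t1 - t) ≤ t1 - t := min_le_right _ _
      have h4 : 0 < min (t - t0) (t1 - t) := lt_min (by linarith) (by linarith)
      constructor <;> [linarith [h1.1]; linarith [h1.2]]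
    have hballo : Metric.ball t ε ⊆ Set.Ioo t0 t1 :=
      fun s hs => hball (Metric.ball_subset_closedBall hs)
    -- bound for the time derivative on a compact neighborhood
    have hK : IsCompact ((Set.uIcc (0 : ℝ) cc) ×ˢ Metric.closedBall t ε) :=
      isCompact_uIcc.prod (isCompact_closedBall _ _)
    obtain ⟨C, hC⟩ := hK.exists_bound_of_continuousOn (hvtc.mono (by
      intro p hp
      exact ⟨Set.mem_univ _, hball hp.2⟩))
    -- part A : fixed endpoints, moving time
    have hA : HasDerivAt (fun s => ∫ x in (0 : ℝ)..cc, u x s)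
        (∫ x in (0 : ℝ)..cc, vt (x, t)) t := by
      have hmain := intervalIntegral.hasDerivAt_integral_of_dominated_loc_of_deriv_le
        (F := fun s x => u x s) (F' := fun s x => vt (x, s)) (x₀ := t)
        (a := (0 : ℝ)) (b := cc) (bound := fun _ => C) (μ := volume) (Metric.ball_mem_nhds t εpos)
        ?_ ?_ ?_ ?_ ?_ ?_
      · exact hmain.2
      · filter_upwards [Ioo_mem_nhds ht0 ht1] with s hs
        exact (hcx s (tIcc hs)).aestronglyMeasurable
      · exact (hcx t htI).intervalIntegrable 0 cc
      · refine Continuous.aestronglyMeasurable ?_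
        rw [← continuousOn_univ]
        have hmap : Continuous fun x : ℝ => ((x : ℝ), t) := continuous_id.prodMk continuous_const
        exact hvtc.comp hmap.continuousOn (fun x _ => ⟨Set.mem_univ _, htJ⟩)
      · refine Filter.Eventually.of_forall (fun x hx s hs => ?_)
        refine hC (x, s) ⟨?_, Metric.ball_subset_closedBall hs⟩
        exact Set.Ioc_subset_Icc_self hx
      · exact intervalIntegrable_const
      · exact Filter.Eventually.of_forall (fun x hx s hs => hvt x s (hballo hs))
    -- part B : moving endpoint, frozen time
    have hB : HasDerivAt (fun s => ∫ x in cc..c s, u x t) (u cc t * c' t) t := by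
      have hB0 : HasDerivAt (fun y => ∫ x in cc..y, u x t) (u cc t) cc :=
        intervalIntegral.integral_hasDerivAt_right
          ((hcx t htI).intervalIntegrable cc cc)
          ((hcx t htI).stronglyMeasurableAtFilter _ _)
          (hcx t htI).continuousAt
      exact hB0.comp t (hc t htI)
    -- part E : the error term has derivative 0
    have hE : HasDerivAt
        (fun s => (∫ x in cc..c s, u x s) - ∫ x in cc..c s, u x t) 0 t := by
      rw [hasDerivAt_iff_isLittleO]
      have hcont : ContinuousAt c t := (hc t htI).continuousAt
      obtain ⟨K, V, hV, hKL⟩ := (hUat cc t htJ).exists_lipschitzOnWith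
      obtain ⟨δ, δpos, hδ⟩ := Metric.mem_nhds_iff.mp hV
      have hev1 : ∀ᶠ s in 𝓝 t, c s ∈ Metric.ball cc (δ / 2) :=
        hcont (Metric.ball_mem_nhds _ (by positivity))
      have hev2 : ∀ᶠ s in 𝓝 t, s ∈ Metric.ball t (δ / 2) :=
        Metric.ball_mem_nhds _ (by positivity)
      have hev3 : ∀ᶠ s in 𝓝 t, s ∈ Set.Ioo t0 t1 := Ioo_mem_nhds ht0 ht1
      have hO : (fun s => (∫ x in cc..c s, u x s) - ∫ x in cc..c s, u x t)
          =O[𝓝 t] fun s => (s - t) * (c s - cc) := by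
        rw [Asymptotics.isBigO_iff]
        refine ⟨K, ?_⟩
        filter_upwards [hev1, hev2, hev3] with s h1 h2 h3
        have hi1 : IntervalIntegrable (fun x => u x s) volume cc (c s) :=
          (hcx s (tIcc h3)).intervalIntegrable _ _
        have hi2 : IntervalIntegrable (fun x => u x t) volume cc (c s) :=
          (hcx t htI).intervalIntegrable _ _
        have hsub : (∫ x in cc..c s, u x s) - ∫ x in cc..c s, u x t
            = ∫ x in cc..c s, (u x s - u x t) :=
          (intervalIntegral.integral_sub hi1 hi2).symm
        rw [hsub]
        have hbd : ∀ x ∈ Set.uIoc cc (c s), ‖u x s - u x t‖ ≤ (K : ℝ) * |s - t| := by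
          intro x hx
          have hx' : x ∈ Set.uIcc cc (c s) := Set.Ioc_subset_Icc_self hx
          have hxd : |x - cc| ≤ |c s - cc| := by
            rcases Set.mem_uIcc.mp hx' with h | h
            · rw [abs_of_nonneg (by linarith : (0:ℝ) ≤ x - cc),
                abs_of_nonneg (by linarith : (0:ℝ) ≤ c s - cc)]
              linarith
            · rw [abs_of_nonpos (by linarith : x - cc ≤ 0),
                abs_of_nonpos (by linarith : c s - cc ≤ 0)]
              linarith
          have hcsd : |c s - cc| < δ / 2 := by
            have := Metric.mem_ball.mp h1
            rwa [Real.dist_eq] at this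
          have hsd : |s - t| < δ / 2 := by
            have := Metric.mem_ball.mp h2
            rwa [Real.dist_eq] at this
          have hm1 : ((x : ℝ), s) ∈ V := by
            apply hδ
            rw [Metric.mem_ball, Prod.dist_eq]
            refine max_lt ?_ ?_ <;> rw [Real.dist_eq] <;> [linarith [hxd]; linarith]
          have hm2 : ((x : ℝ), t) ∈ V := by
            apply hδ
            rw [Metric.mem_ball, Prod.dist_eq]
            refine max_lt ?_ ?_ <;> rw [Real.dist_eq] <;>
              [linarith [hxd]; (simp [abs_of_nonneg]; positivity)]
          have := hKL.dist_le_mul (x, s) hm1 (x, t) hm2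
          rw [Prod.dist_eq] at this
          simp only [Real.dist_eq] at this
          have hmax : max |x - x| |s - t| = |s - t| := by
            simp
          rw [hmax] at this
          simpa [Real.norm_eq_abs, Real.dist_eq] using this
        have hnorm := intervalIntegral.norm_integral_le_of_norm_le_const hbd
        calc ‖∫ x in cc..c s, (u x s - u x t)‖
            ≤ (K : ℝ) * |s - t| * |c s - cc| := hnorm
          _ = (K : ℝ) * ‖(s - t) * (c s - cc)‖ := by
              rw [Real.norm_eq_abs, abs_mul]; ring
      have ho : (fun s => (s - t) * (c s - cc)) =o[𝓝 t] fun s => s - t := by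
        have h1 : (fun s : ℝ => s - t) =O[𝓝 t] fun s => s - t :=
          Asymptotics.isBigO_refl _ _
        have h2 : (fun s => c s - cc) =o[𝓝 t] fun _ : ℝ => (1 : ℝ) := by
          rw [Asymptotics.isLittleO_one_iff]
          simpa [hcc] using hcont.tendsto.sub (tendsto_const_nhds (x := cc))
        simpa using h1.mul_isLittleO h2
      have hfin := hO.trans_isLittleO ho
      have heq0 : (∫ x in cc..c t, u x t) - ∫ x in cc..c t, u x t = 0 := by ring
      simpa [heq0, intervalIntegral.integral_same] using hfin
    -- combine the three parts
    have hsum := (hA.add hB).add hE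
    have heq : (fun s => ∫ x in (0 : ℝ)..c s, u x s) =ᶠ[𝓝 t] fun s =>
        ((∫ x in (0 : ℝ)..cc, u x s) + ∫ x in cc..c s, u x t)
          + ((∫ x in cc..c s, u x s) - ∫ x in cc..c s, u x t) := by
      filter_upwards [Ioo_mem_nhds ht0 ht1] with s hs
      have hi1 : IntervalIntegrable (fun x => u x s) volume 0 cc :=
        (hcx s (tIcc hs)).intervalIntegrable _ _
      have hi2 : IntervalIntegrable (fun x => u x s) volume cc (c s) :=
        (hcx s (tIcc hs)).intervalIntegrable _ _
      have h3 := intervalIntegral.integral_add_adjacent_intervals hi1 hi2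
      linarith
    have hD := hsum.congr_of_eventuallyEq heq
    have hval : (∫ x in (0 : ℝ)..cc, vt (x, t)) + u cc t * c' t + 0 = f (u 0 t) := by
      rw [hint_vt t htJ 0 cc, hnf t htI]
      ring
    exact hval ▸ hD
  -- the difference of the two primitives has derivative 0 on the interior
  have hgd : ∀ t ∈ Set.Ioo t0 t1, HasDerivAt
      (fun s => (∫ x in (0 : ℝ)..γ s, u x s) - ∫ x in (0 : ℝ)..σ s, u x s) 0 t := by
    intro t htJ
    have := (key γ γ' hγ hnfγ t htJ).sub (key σ σ' hσ hnfσ t htJ)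
    rw [sub_self] at this
    exact this
  -- continuity of the primitives on the closed strip
  have hΦcont : ∀ c : ℝ → ℝ, (∀ t ∈ Set.Icc t0 t1, ContinuousAt c t) →
      ContinuousOn (fun s => ∫ x in (0 : ℝ)..c s, u x s) (Set.Icc t0 t1) := by
    intro c hcC
    rw [continuousOn_iff_continuous_restrict]
    have hFc : Continuous
        (Function.uncurry fun (p : Set.Icc t0 t1) (x : ℝ) => u x (p : ℝ)) := by
      have hcomp : Continuous fun q : (Set.Icc t0 t1) × ℝ => ((q.2 : ℝ), (q.1 : ℝ)) := by
        fun_prop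
      exact hu.continuousOn.comp_continuous hcomp (fun q => ⟨Set.mem_univ _, q.1.2⟩)
    have hsc : Continuous fun p : Set.Icc t0 t1 => c (p : ℝ) := by
      rw [continuous_iff_continuousAt]
      intro p
      exact (hcC p p.2).comp continuous_subtype_val.continuousAt
    exact intervalIntegral.continuous_parametric_intervalIntegral_of_continuous hFc hsc
  have hgc : ContinuousOn
      (fun s => (∫ x in (0 : ℝ)..γ s, u x s) - ∫ x in (0 : ℝ)..σ s, u x s)
      (Set.Icc t0 t1) :=
    (hΦcont γ (fun t htI => (hγ t htI).continuousAt)).sub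
      (hΦcont σ (fun t htI => (hσ t htI).continuousAt))
  have hconst := const_aux ht hgc hgd
  -- translating back to the integral between the curves
  have hGeq : ∀ t ∈ Set.Icc t0 t1, (∫ x in σ t..γ t, u x t) =
      (∫ x in (0 : ℝ)..γ t, u x t) - ∫ x in (0 : ℝ)..σ t, u x t := by
    intro t htI
    have hi1 : IntervalIntegrable (fun x => u x t) volume 0 (σ t) :=
      (hcx t htI).intervalIntegrable _ _
    have hi2 : IntervalIntegrable (fun x => u x t) volume (σ t) (γ t) :=
      (hcx t htI).intervalIntegrable _ _
    have h3 := intervalIntegral.integral_add_adjacent_intervals hi1 hi2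
    linarith
  have hmain : ∀ t ∈ Set.Icc t0 t1,
      (∫ x in σ t..γ t, u x t) = ∫ x in σ t0..γ t0, u x t0 := by
    intro t htI
    rw [hGeq t htI, hGeq t0 ⟨le_refl t0, ht.le⟩]
    exact hconst t htI
  exact ⟨hmain, hmain t1 ⟨ht.le, le_refl t1⟩⟩
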